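/- If N is even, then for every integer k with |k| < ⌈N/2⌉ (so that |k| ≤ N/2 - 1), one has S(⌈N/2⌉ - 1 - k) · S(⌈N/2⌉ - 1 + k) = N / (2 cos(ω k / 2)). -/

import Mathlib

open Real Finset

lemma abs_one_sub_exp (θ : ℝ) (h0 : 0 ≤ θ) (h1 : θ ≤ 2 * π) :
    ‖1 - Complex.exp (θ * Complex.I)‖ = 2 * Real.sin (θ / 2) := by
  have hs : 0 ≤ Real.sin (θ / 2) := Real.sin_nonneg_of_nonneg_of_le_pi (by linarith) (by linarith)
  have hc : Real.cos θ = 1 - 2 * Real.sin (θ / 2) ^ 2 := by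
    have h2 : Real.cos (2 * (θ/2)) = 2 * Real.cos (θ/2) ^ 2 - 1 := Real.cos_two_mul _
    rw [show 2 * (θ/2) = θ by ring] at h2
    nlinarith [Real.sin_sq_add_cos_sq (θ/2)]
  rw [Complex.exp_mul_I, Complex.norm_def, Complex.normSq_apply]
  simp only [Complex.sub_re, Complex.sub_im, Complex.one_re, Complex.one_im, Complex.add_re,
    Complex.add_im, Complex.mul_re, Complex.mul_im, Complex.I_re, Complex.I_im,
    Complex.ofReal_re, Complex.ofReal_im, Complex.cos_ofReal_re, Complex.sin_ofReal_re,
    Complex.cos_ofReal_im, Complex.sin_ofReal_im]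
  rw [show (1 - (Real.cos θ + (Real.sin θ * 0 - 0 * 1))) * (1 - (Real.cos θ + (Real.sin θ * 0 - 0 * 1))) + (0 - (0 + (Real.sin θ * 1 + 0 * 0))) * (0 - (0 + (Real.sin θ * 1 + 0 * 0))) = (2 * Real.sin (θ/2)) ^ 2 by nlinarith [Real.sin_sq_add_cos_sq θ]]
  exact Real.sqrt_sq (by linarith)

lemma prod_sin_eq (N : ℕ) (hN : 1 ≤ N) :
    ∏ j ∈ Finset.Icc 1 (N - 1), (2 * Real.sin (π * j / N)) = N := by
  obtain ⟨n, rfl⟩ : ∃ n, N = n + 1 := ⟨N - 1, by omega⟩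
  have hprim := Complex.isPrimitiveRoot_exp (n + 1) (by omega)
  have hprod := hprim.prod_one_sub_pow_eq_order
  have habs := congrArg (fun z : ℂ => ‖z‖) hprod
  rw [norm_prod] at habs
  push_cast at habs
  have hstep : ∀ k ∈ Finset.range n,
      ‖1 - Complex.exp (2 * π * Complex.I / (n + 1)) ^ (k + 1)‖
        = 2 * Real.sin (π * (k + 1) / (n + 1)) := by
    intro k hk
    rw [Finset.mem_range] at hk
    rw [← Complex.exp_nat_mul]
    push_cast
    have : (k + 1 : ℂ) * (2 * π * Complex.I / (n + 1))
        = ((2 * π * (k + 1) / (n + 1) : ℝ) : ℂ) * Complex.I := by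
      push_cast
      field_simp
    rw [this, abs_one_sub_exp]
    · congr 1
      ring
    · positivity
    · rw [div_le_iff₀ (by positivity)]
      have : (k : ℝ) + 1 ≤ n := by exact_mod_cast hk
      nlinarith [Real.pi_pos]
  rw [Finset.prod_congr rfl hstep] at habs
  have : ‖((n : ℂ) + 1)‖ = (n + 1 : ℝ) := by
    rw [show ((n : ℂ) + 1) = ((n + 1 : ℝ) : ℂ) by push_cast; ring, Complex.norm_real, Real.norm_eq_abs,
      abs_of_nonneg (by positivity)]
  rw [this] at habs
  rw [show (n + 1) - 1 = n by omega, show Finset.Icc 1 n = Finset.Ico 1 (n + 1) by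
    rw [Finset.Ico_add_one_right_eq_Icc], Finset.prod_Ico_eq_prod_range]
  simp only [Nat.add_sub_cancel]
  calc ∏ j ∈ Finset.range n, 2 * Real.sin (π * ((1 + j : ℕ)) / ((n + 1 : ℕ)))
      = ∏ x ∈ Finset.range n, 2 * Real.sin (π * ((x : ℝ) + 1) / ((n : ℝ) + 1)) := by
        apply Finset.prod_congr rfl; intro j hj; push_cast; ring_nf
    _ = (n : ℝ) + 1 := habs
    _ = ((n + 1 : ℕ) : ℝ) := by push_cast; ring

lemma prod_reflect (N b : ℕ) (hN : 1 ≤ N) :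
    ∏ j ∈ Finset.Icc (b + 1) (N - 1), (2 * Real.sin (π * j / N))
      = ∏ j ∈ Finset.Icc 1 (N - 1 - b), (2 * Real.sin (π * j / N)) := by
  apply Finset.prod_nbij' (fun j => N - j) (fun j => N - j)
  · intro j hj; simp only [Finset.mem_Icc] at *; omega
  · intro j hj; simp only [Finset.mem_Icc] at *; omega
  · intro j hj; simp only [Finset.mem_Icc] at hj; omega
  · intro j hj; simp only [Finset.mem_Icc] at hj; omega
  · intro j hj
    simp only [Finset.mem_Icc] at hj
    have hjN : j ≤ N := by omega
    have : ((N - j : ℕ) : ℝ) = (N : ℝ) - j := by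
      push_cast [Nat.cast_sub hjN]; ring
    rw [this]
    congr 1
    rw [show π * ((N : ℝ) - j) / N = π - π * j / N by
      field_simp]
    rw [Real.sin_pi_sub]

lemma key (N M k : ℕ) (hNM : N = 2 * M) (hM : 1 ≤ M) (hk : k < M) :
    (∏ j ∈ Finset.Icc 1 (M - 1 - k), (2 * Real.sin (π * j / N)))
      * (∏ j ∈ Finset.Icc 1 (M - 1 + k), (2 * Real.sin (π * j / N)))
      = N / (2 * Real.cos (π * k / N)) := by
  have hN : 1 ≤ N := by omega
  set f : ℕ → ℝ := fun j => 2 * Real.sin (π * j / N) with hf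
  have hb : M - 1 + k ≤ N - 1 := by omega
  have h1 : (∏ j ∈ Finset.Icc 1 (M - 1 + k), f j)
      * (∏ j ∈ Finset.Icc (M - 1 + k + 1) (N - 1), f j) = (N : ℝ) := by
    rw [show Finset.Icc (M - 1 + k + 1) (N - 1) = Finset.Ioc (M - 1 + k) (N - 1) from
        Finset.Icc_add_one_left_eq_Ioc _ _,
      show Finset.Icc 1 (M - 1 + k) = Finset.Ioc 0 (M - 1 + k) from Finset.Icc_add_one_left_eq_Ioc 0 _,
      Finset.prod_Ioc_consecutive f (Nat.zero_le _) hb,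
      show Finset.Ioc 0 (N - 1) = Finset.Icc 1 (N - 1) from (Finset.Icc_add_one_left_eq_Ioc 0 _).symm]
    exact prod_sin_eq N hN
  have h2 : (∏ j ∈ Finset.Icc (M - 1 + k + 1) (N - 1), f j)
      = ∏ j ∈ Finset.Icc 1 (M - k), f j := by
    rw [prod_reflect N (M - 1 + k) hN, show N - 1 - (M - 1 + k) = M - k by omega]
  have h3 : (∏ j ∈ Finset.Icc 1 (M - k), f j)
      = (∏ j ∈ Finset.Icc 1 (M - 1 - k), f j) * f (M - k) := by
    rw [show M - k = (M - 1 - k) + 1 by omega, Finset.prod_Icc_succ_top (by omega)]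
  have hcast : ((M - k : ℕ) : ℝ) = (M : ℝ) - k := by
    push_cast [Nat.cast_sub hk.le]; ring
  have hMpos : (0 : ℝ) < M := by exact_mod_cast hM
  have h4 : f (M - k) = 2 * Real.cos (π * k / N) := by
    rw [hf]
    simp only
    rw [hcast, show π * ((M : ℝ) - k) / N = π / 2 - π * k / N by
      rw [hNM]; push_cast; field_simp, Real.sin_pi_div_two_sub]
  have hcos : 0 < Real.cos (π * k / N) := by
    apply Real.cos_pos_of_mem_Ioo
    constructor
    · have : (0 : ℝ) ≤ π * k / N := by positivity
      linarith [Real.pi_pos]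
    · rw [hNM]
      push_cast
      rw [div_lt_iff₀ (by positivity)]
      have : (k : ℝ) < M := by exact_mod_cast hk
      nlinarith [Real.pi_pos]
  rw [h2, h3, h4] at h1
  rw [eq_div_iff (by positivity)]
  linear_combination h1

/-- `S N k = ∏_{j=1}^{k} (2 sin(ω j / 2))` with `ω = 2π/N` (so `ω j / 2 = π j / N`),
extended to integer arguments (equal to `1` for `k ≤ 0`). -/
noncomputable def S (N : ℕ) (k : ℤ) : ℝ := ∏ j ∈ Finset.Icc 1 k.toNat, (2 * Real.sin (π * j / N))

theorem stmt_4 (N : ℕ) (hN : 2 ≤ N) (heven : Even N) (k : ℤ)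
    (hk : |k| < ((N : ℤ) + 1) / 2) :
    S N (((N : ℤ) + 1) / 2 - 1 - k) * S N (((N : ℤ) + 1) / 2 - 1 + k)
      = N / (2 * Real.cos (2 * π / N * k / 2)) := by
  obtain ⟨M, hM⟩ := heven
  have hNM : N = 2 * M := by omega
  have hM1 : 1 ≤ M := by omega
  have hdiv : ((N : ℤ) + 1) / 2 = (M : ℤ) := by omega
  rw [hdiv] at hk ⊢
  rw [abs_lt] at hk
  have hNpos : (0 : ℝ) < N := by positivity
  rcases le_or_gt 0 k with hk0 | hk0
  · set kn := k.toNat with hkn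
    have hkk : k = (kn : ℤ) := by omega
    have hkM : kn < M := by omega
    have e1 : ((M : ℤ) - 1 - k).toNat = M - 1 - kn := by omega
    have e2 : ((M : ℤ) - 1 + k).toNat = M - 1 + kn := by omega
    rw [S, S, e1, e2, key N M kn hNM hM1 hkM]
    congr 2
    rw [hkk]
    push_cast
    field_simp
  · set kn := (-k).toNat with hkn
    have hkk : k = -(kn : ℤ) := by omega
    have hkM : kn < M := by omega
    have e1 : ((M : ℤ) - 1 - k).toNat = M - 1 + kn := by omega
    have e2 : ((M : ℤ) - 1 + k).toNat = M - 1 - kn := by omega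
    rw [S, S, e1, e2, mul_comm, key N M kn hNM hM1 hkM]
    congr 2
    rw [show 2 * π / (N : ℝ) * (k : ℝ) / 2 = -(π * kn / N) by
      rw [show ((k : ℤ) : ℝ) = -(kn : ℝ) by rw [hkk]; push_cast; ring]
      field_simp]
    rw [Real.cos_neg]
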